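/- For every signal f, MTL formulas φ1 and φ2, and nonempty interval I of nonnegative reals with 0 < inf I and sup I < ∞, there exist two intervals T1, T2 ⊆ ℝ≥0 such that: (a) t1 < t2 for all t1 ∈ T1 and t2 ∈ T2; and (b) for all t ∈ ℝ≥0, (t < Step(I) and f^t ⊨ φ1 U_I φ2 under the new satisfaction relation) if and only if t ∈ T1 ∪ T2. -/

import Mathlib

open scoped NNReal ENNReal
open Set

namespace MITL

/-- A signal assigns to each nonnegative real time the set of atomic
propositions true at that time. -/
abbrev Signal (AP : Type*) := ℝ≥0 → Set AP

/-- The shifted signal `f^r`, defined by `f^r(t) = f(r+t)`. -/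
def shift {AP : Type*} (f : Signal AP) (r : ℝ≥0) : Signal AP := fun t => f (r + t)

/-- MTL formulas over atomic propositions `AP`; the timing constraints are
(intended to be) intervals of nonnegative reals. -/
inductive MTL (AP : Type*) where
  | top : MTL AP
  | bot : MTL AP
  | atom : AP → MTL AP
  | neg : MTL AP → MTL AP
  | disj : MTL AP → MTL AP → MTL AP
  | conj : MTL AP → MTL AP → MTL AP
  | until_ : MTL AP → MTL AP → Set ℝ≥0 → MTL AP
  | release : MTL AP → MTL AP → Set ℝ≥0 → MTL AP

variable {AP : Type*}

/-- The NEW satisfaction relation: `NSat f φ` means `f ⊨ φ`. -/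
def NSat : Signal AP → MTL AP → Prop
  | _, .top => True
  | _, .bot => False
  | f, .atom p => p ∈ f 0
  | f, .neg φ => ¬ NSat f φ
  | f, .disj φ1 φ2 => NSat f φ1 ∨ NSat f φ2
  | f, .conj φ1 φ2 => NSat f φ1 ∧ NSat f φ2
  | f, .until_ φ1 φ2 I =>
      ∃ t1 ∈ I, NSat (shift f t1) φ2 ∧ ∀ t2 ∈ Set.Ioo 0 t1, NSat (shift f t2) φ1
  | f, .release φ1 φ2 I =>
      (∀ t1 ∈ I, NSat (shift f t1) φ2) ∨
      (∃ t1 : ℝ≥0, 0 < t1 ∧ NSat (shift f t1) φ1 ∧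
        ∀ t2 ∈ Set.Ioc 0 t1 ∩ I, NSat (shift f t2) φ2) ∨
      (∃ t1 ∈ I ∪ {sInf I}, ∃ t2 ∈ I, t1 < t2 ∧
        ∀ t3 ∈ I, (t3 ≤ t1 → NSat (shift f t3) φ2) ∧
          (t1 < t3 → t3 ≤ t2 → NSat (shift f t3) φ1))

/-- Finite variability from the right of a signal `f` with respect to a formula
`φ`, relative to a satisfaction relation `Sat`. -/
def FinVarRight (Sat : Signal AP → MTL AP → Prop) (f : Signal AP) (φ : MTL AP) : Prop :=
  ∀ r : ℝ≥0,
    (∀ ε : ℝ≥0, 0 < ε → ∃ t ∈ Set.Ioo r (r + ε), Sat (shift f t) φ) →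
    ∃ ε : ℝ≥0, 0 < ε ∧ ∀ t ∈ Set.Ioo r (r + ε), Sat (shift f t) φ

/-- Finite variability from the left of a signal `f` with respect to a formula
`φ`, relative to a satisfaction relation `Sat`. -/
def FinVarLeft (Sat : Signal AP → MTL AP → Prop) (f : Signal AP) (φ : MTL AP) : Prop :=
  ∀ r : ℝ≥0, 0 < r →
    (∀ ε ∈ Set.Ioo 0 r, ∃ t ∈ Set.Ioo (r - ε) r, Sat (shift f t) φ) →
    ∃ ε ∈ Set.Ioo 0 r, ∀ t ∈ Set.Ioo (r - ε) r, Sat (shift f t) φ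

open Classical in
/-- The step size of a (bounded nonempty) interval. -/
noncomputable def Step (I : Set ℝ≥0) : ℝ≥0 :=
  if sSup I - sInf I < sInf I then sSup I - sInf I else sInf I

lemma shift_shift (f : Signal AP) (t d : ℝ≥0) : shift (shift f t) d = shift f (t + d) := by
  funext s; simp [shift, add_assoc]

lemma NSat_until_iff (f : Signal AP) (φ1 φ2 : MTL AP) (I : Set ℝ≥0) (t : ℝ≥0) :
    NSat (shift f t) (.until_ φ1 φ2 I) ↔
      ∃ d ∈ I, NSat (shift f (t + d)) φ2 ∧
        ∀ e ∈ Set.Ioo 0 d, NSat (shift f (t + e)) φ1 := by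
  simp only [NSat, shift_shift]

lemma sat_abs {f : Signal AP} {φ : MTL AP} {t d : ℝ≥0}
    (h : ∀ e ∈ Set.Ioo 0 d, NSat (shift f (t + e)) φ)
    (u : ℝ≥0) (h1 : t < u) (h2 : u < t + d) : NSat (shift f u) φ := by
  have := h (u - t) ⟨tsub_pos_of_lt h1, by
    rw [tsub_lt_iff_left h1.le]; exact h2⟩
  rwa [add_tsub_cancel_of_le h1.le] at this

/-- The key "no three components" lemma: if `t1 < t2 < t3 < t4 < Step I`,
`t1` and `t3` satisfy the until formula but `t2` does not, then `t4` does. -/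
lemma until_key (f : Signal AP) (φ1 φ2 : MTL AP)
    (I : Set ℝ≥0) (hI : I.OrdConnected) (hne : I.Nonempty) (hbdd : BddAbove I)
    {t1 t2 t3 t4 : ℝ≥0} (h12 : t1 < t2) (h23 : t2 < t3) (h34 : t3 < t4)
    (h4 : t4 < Step I)
    (hU1 : NSat (shift f t1) (.until_ φ1 φ2 I))
    (hU2 : ¬ NSat (shift f t2) (.until_ φ1 φ2 I))
    (hU3 : NSat (shift f t3) (.until_ φ1 φ2 I)) :
    NSat (shift f t4) (.until_ φ1 φ2 I) := by
  set a := sInf I with ha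
  set b := sSup I with hb
  have hStep_a : Step I ≤ a := by
    rw [Step]; split
    · exact le_of_lt (by assumption)
    · exact le_refl _
  have hStep_ba : Step I ≤ b - a := by
    rw [Step]; split
    · exact le_refl _
    · exact le_of_not_gt (by assumption)
  rw [NSat_until_iff] at hU1 hU2 hU3 ⊢
  obtain ⟨d1, hd1I, hS2_1, hS1_1⟩ := hU1
  obtain ⟨d3, hd3I, hS2_3, hS1_3⟩ := hU3
  have ha_d1 : a ≤ d1 := csInf_le (OrderBot.bddBelow I) hd1I
  have ha_d3 : a ≤ d3 := csInf_le (OrderBot.bddBelow I) hd3I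
  have h3Step : t3 < Step I := h34.trans h4
  have h3a : t3 < a := lt_of_lt_of_le h3Step hStep_a
  have h4a : t4 < a := lt_of_lt_of_le h4 hStep_a
  -- φ1 holds at all absolute times in (t2, t3 + d3)
  have cov13 : ∀ u, t2 < u → u < t3 + d3 → NSat (shift f u) φ1 := by
    intro u hu1 hu2
    rcases le_or_gt u t3 with h | h
    · exact sat_abs hS1_1 u (h12.trans hu1)
        (lt_of_le_of_lt h (h3a.trans_le (ha_d1.trans le_add_self)))
    · exact sat_abs hS1_3 u h hu2
  have ht2lt : t2 < t3 + d3 := h23.trans_le le_self_add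
  set d2 := t3 + d3 - t2 with hd2def
  have ht2d2 : t2 + d2 = t3 + d3 := add_tsub_cancel_of_le ht2lt.le
  have hd3d2 : d3 ≤ d2 := by
    have h := tsub_le_tsub_left h23.le (t3 + d3)
    rw [← hd2def] at h
    simpa using h
  -- since t2 fails, d2 is a strict upper bound of I
  have hub : ∀ y ∈ I, y < d2 := by
    intro y hy
    by_contra hc
    push_neg at hc
    apply hU2
    refine ⟨d2, hI.out hd3I hy ⟨hd3d2, hc⟩, by rwa [ht2d2], ?_⟩
    intro e he
    exact cov13 (t2 + e) (lt_add_of_pos_right _ he.1)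
      (by rw [← ht2d2]; exact add_lt_add_right he.2 t2)
  have hb_d2 : b ≤ d2 := csSup_le hne fun y hy => (hub y hy).le
  -- the witness duration for t4
  set d4 := t3 + d3 - t4 with hd4def
  have ht4lt : t4 < t3 + d3 := h4a.trans_le (ha_d3.trans le_add_self)
  have ht4d4 : t4 + d4 = t3 + d3 := add_tsub_cancel_of_le ht4lt.le
  have hd4d3 : d4 ≤ d3 := by
    have h := tsub_le_tsub_left h34.le (t3 + d3)
    rw [← hd4def] at h
    simpa using h
  have ha_d4 : a < d4 := by
    have h1 : a + t4 < b := by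
      have ht : t4 < b - a := lt_of_lt_of_le h4 hStep_ba
      rwa [lt_tsub_iff_left] at ht
    have h2 : b - t4 ≤ d4 := by
      have hble : b ≤ t3 + d3 := le_trans hb_d2 (by rw [← ht2d2]; exact le_add_self)
      exact tsub_le_tsub_right hble t4
    have h3 : a < b - t4 := by
      rw [lt_tsub_iff_right]
      exact h1
    exact h3.trans_le h2
  obtain ⟨y, hyI, hyd4⟩ := exists_lt_of_csInf_lt hne ha_d4
  have hd4I : d4 ∈ I := hI.out hyI hd3I ⟨hyd4.le, hd4d3⟩
  refine ⟨d4, hd4I, by rwa [ht4d4], ?_⟩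
  intro e he
  exact sat_abs hS1_3 (t4 + e) (h34.trans_le le_self_add)
    (by rw [← ht4d4]; exact add_lt_add_right he.2 t4)

theorem until_finitely_variable (f : Signal AP) (φ1 φ2 : MTL AP)
    (I : Set ℝ≥0) (hI : I.OrdConnected) (hne : I.Nonempty)
    (hinf : 0 < sInf I) (hbdd : BddAbove I) :
    ∃ T1 T2 : Set ℝ≥0, T1.OrdConnected ∧ T2.OrdConnected ∧
      (∀ t1 ∈ T1, ∀ t2 ∈ T2, t1 < t2) ∧
      ∀ t : ℝ≥0,
        (t < Step I ∧ NSat (shift f t) (.until_ φ1 φ2 I)) ↔ t ∈ T1 ∪ T2 := by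
  classical
  set W : Set ℝ≥0 := {t | t < Step I ∧ NSat (shift f t) (.until_ φ1 φ2 I)} with hWdef
  by_cases hgap : ∃ g, g ∉ W ∧ (∃ x ∈ W, x < g) ∧ (∃ y ∈ W, g < y)
  · obtain ⟨g, hgW, ⟨x, hxW, hxg⟩, ⟨y, hyW, hgy⟩⟩ := hgap
    have hgStep : g < Step I := hgy.trans hyW.1
    have hgU : ¬ NSat (shift f g) (.until_ φ1 φ2 I) := fun h => hgW ⟨hgStep, h⟩
    refine ⟨W ∩ Set.Iic g, W ∩ Set.Ioi g, ?_, ?_, ?_, ?_⟩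
    · constructor
      intro u hu v hv w hw
      refine ⟨?_, hw.2.trans hv.2⟩
      rcases eq_or_lt_of_le hw.1 with h1 | h1
      · rw [← h1]; exact hu.1
      rcases eq_or_lt_of_le hw.2 with h2 | h2
      · rw [h2]; exact hv.1
      have hvg : v < g := lt_of_le_of_ne hv.2 (fun h => hgW (h ▸ hv.1))
      have hwStep : w < Step I := (h2.trans hvg).trans hgStep
      refine ⟨hwStep, ?_⟩
      by_contra hwU
      exact hgU (until_key f φ1 φ2 I hI hne hbdd h1 h2 hvg hgStep hu.1.2 hwU hv.1.2)
    · constructor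
      intro u hu v hv w hw
      refine ⟨?_, lt_of_lt_of_le hu.2 hw.1⟩
      rcases eq_or_lt_of_le hw.1 with h1 | h1
      · rw [← h1]; exact hu.1
      rcases eq_or_lt_of_le hw.2 with h2 | h2
      · rw [h2]; exact hv.1
      have hwStep : w < Step I := h2.trans hv.1.1
      refine ⟨hwStep, ?_⟩
      exact until_key f φ1 φ2 I hI hne hbdd hxg hu.2 h1 hwStep hxW.2 hgU hu.1.2
    · intro s hs r hr
      exact lt_of_le_of_lt hs.2 hr.2
    · intro t
      constructor
      · intro ht
        rcases le_or_gt t g with h | h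
        · exact Or.inl ⟨ht, h⟩
        · exact Or.inr ⟨ht, h⟩
      · rintro (h | h) <;> exact h.1
  · refine ⟨∅, W, Set.ordConnected_empty, ?_, ?_, ?_⟩
    · constructor
      intro u hu v hv w hw
      rcases eq_or_lt_of_le hw.1 with h1 | h1
      · rwa [← h1]
      rcases eq_or_lt_of_le hw.2 with h2 | h2
      · rwa [h2]
      by_contra hwW
      exact hgap ⟨w, hwW, ⟨u, hu, h1⟩, ⟨v, hv, h2⟩⟩
    · intro t1 ht1 t2 _
      exact absurd ht1 (Set.notMem_empty t1)
    · intro t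
      simp only [Set.empty_union]
      exact Iff.rfl

end MITL
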